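/- Let H ∈ GF(q)^{B_s × B}, G ∈ GF(q)^{μ × B}, and let X be uniform on GF(q)^B with S = HX and E = GX. For any Γ' ⊆ {1,...,B_s} with |Γ'| ≤ B − μ, the mutual information satisfies I(S_{Γ'}; E) = (rank H_{Γ'} + rank G − rank [H_{Γ'}; G]) · log q. -/

import Mathlib

/-- Probability that a random variable `X` on finite sample space with weights `w`
    takes value `x`. -/
noncomputable def pOf {Ω α : Type*} [Fintype Ω] [DecidableEq α]
    (w : Ω → ℝ) (X : Ω → α) (x : α) : ℝ :=
  ∑ ω : Ω, if X ω = x then w ω else 0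

/-- Shannon entropy (natural log) of a random variable on a finite sample space. -/
noncomputable def entropy {Ω α : Type*} [Fintype Ω] [Fintype α] [DecidableEq α]
    (w : Ω → ℝ) (X : Ω → α) : ℝ :=
  - ∑ x : α, pOf w X x * Real.log (pOf w X x)

/-- Mutual information I(X;Y) of two random variables on a finite sample space. -/
noncomputable def mutualInfo {Ω α β : Type*} [Fintype Ω] [Fintype α] [Fintype β]
    [DecidableEq α] [DecidableEq β] (w : Ω → ℝ) (X : Ω → α) (Y : Ω → β) : ℝ :=
  entropy w X + entropy w Y - entropy w fun ω => (X ω, Y ω)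

lemma pOf_uniform {Ω α : Type*} [Fintype Ω] [DecidableEq α]
    (f : Ω → α) (a : α) :
    pOf (fun _ => 1 / (Fintype.card Ω : ℝ)) f a
      = ((Finset.univ.filter fun ω => f ω = a).card : ℝ) / (Fintype.card Ω : ℝ) := by
  classical
  rw [pOf, ← Finset.sum_filter, Finset.sum_const, nsmul_eq_mul]
  ring

lemma entropy_uniform_fibers {Ω α : Type*} [Fintype Ω] [Fintype α] [DecidableEq α]
    [Nonempty Ω] (f : Ω → α) (k : ℕ)
    (hfib : ∀ a ∈ Finset.image f Finset.univ,
      (Finset.univ.filter fun ω => f ω = a).card = k) :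
    entropy (fun _ => 1 / (Fintype.card Ω : ℝ)) f
      = Real.log ((Finset.image f Finset.univ).card) := by
  classical
  set N := (Finset.image f Finset.univ).card with hN
  have hΩpos : 0 < Fintype.card Ω := Fintype.card_pos
  have hNpos : 0 < N := by
    rw [hN]
    exact Finset.card_pos.mpr ⟨f (Classical.arbitrary Ω), Finset.mem_image_of_mem f (Finset.mem_univ _)⟩
  have hcard : Fintype.card Ω = N * k :=
    calc Fintype.card Ω = (Finset.univ : Finset Ω).card := rfl
    _ = ∑ b ∈ Finset.image f Finset.univ, (Finset.univ.filter fun a => f a = b).card :=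
        Finset.card_eq_sum_card_fiberwise
          (fun x _ => Finset.mem_image_of_mem f (Finset.mem_univ x))
    _ = ∑ _b ∈ Finset.image f Finset.univ, k := Finset.sum_congr rfl hfib
    _ = N * k := by rw [Finset.sum_const, smul_eq_mul]
  have hkpos : 0 < k := by
    rcases Nat.eq_zero_or_pos k with h | h
    · rw [h, mul_zero] at hcard; omega
    · exact h
  have hp : ∀ a ∈ Finset.image f Finset.univ,
      pOf (fun _ => 1 / (Fintype.card Ω : ℝ)) f a = 1 / (N : ℝ) := by
    intro a ha
    rw [pOf_uniform, hfib a ha, hcard]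
    have : (N : ℝ) ≠ 0 := by positivity
    have : (k : ℝ) ≠ 0 := by positivity
    push_cast
    field_simp
  have hp0 : ∀ a, a ∉ Finset.image f Finset.univ →
      pOf (fun _ => 1 / (Fintype.card Ω : ℝ)) f a = 0 := by
    intro a ha
    rw [pOf_uniform]
    have : (Finset.univ.filter fun ω => f ω = a) = ∅ := by
      ext ω
      simp only [Finset.mem_filter, Finset.mem_univ, true_and, Finset.notMem_empty,
        iff_false]
      intro h
      exact ha (h ▸ Finset.mem_image_of_mem f (Finset.mem_univ ω))
    rw [this]
    simp
  rw [entropy]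
  rw [← Finset.sum_subset (Finset.subset_univ (Finset.image f Finset.univ))
    (fun a _ ha => by rw [hp0 a ha]; ring)]
  rw [Finset.sum_congr rfl (fun a ha => by rw [hp a ha])]
  rw [Finset.sum_const, ← hN, nsmul_eq_mul]
  have hNne : (N : ℝ) ≠ 0 := by positivity
  rw [Real.log_div one_ne_zero hNne, Real.log_one]
  field_simp
  ring

lemma fiber_card_linear {F M N : Type*} [Field F] [AddCommGroup M] [Module F M]
    [Fintype M] [DecidableEq M] [AddCommGroup N] [Module F N] [DecidableEq N]
    (L : M →ₗ[F] N) (x₀ : M) :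
    (Finset.univ.filter fun ω => L ω = L x₀).card
      = (Finset.univ.filter fun ω => L ω = 0).card := by
  classical
  refine Finset.card_bij' (fun x _ => x - x₀) (fun y _ => y + x₀) ?_ ?_ ?_ ?_
  · intro a ha
    simp only [Finset.mem_filter, Finset.mem_univ, true_and] at ha ⊢
    rw [map_sub, ha, sub_self]
  · intro a ha
    simp only [Finset.mem_filter, Finset.mem_univ, true_and] at ha ⊢
    rw [map_add, ha, zero_add]
  · intro a _; simp
  · intro a _; simp

lemma entropy_inj_linear {F M N α : Type*} [Field F] [Fintype F] [AddCommGroup M]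
    [Module F M] [Fintype M] [DecidableEq M] [AddCommGroup N] [Module F N] [Fintype N]
    [DecidableEq N] [Fintype α] [DecidableEq α]
    (L : M →ₗ[F] N) (e : N → α) (he : Function.Injective e) :
    entropy (fun _ => 1 / (Fintype.card M : ℝ)) (fun x => e (L x))
      = (Module.finrank F (LinearMap.range L) : ℝ) * Real.log (Fintype.card F) := by
  classical
  have h1 : entropy (fun _ => 1 / (Fintype.card M : ℝ)) (fun x => e (L x))
      = Real.log ((Finset.image (fun x => e (L x)) Finset.univ).card) := by
    apply entropy_uniform_fibers (k := (Finset.univ.filter fun ω => L ω = 0).card)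
    intro a ha
    obtain ⟨x₀, _, rfl⟩ := Finset.mem_image.mp ha
    have : (Finset.univ.filter fun ω => e (L ω) = e (L x₀))
        = (Finset.univ.filter fun ω => L ω = L x₀) := by
      apply Finset.filter_congr
      intro ω _
      exact ⟨fun h => by simpa using he h, fun h => by rw [h]⟩
    rw [this, fiber_card_linear]
  have h2 : (Finset.image (fun x => e (L x)) Finset.univ).card
      = Fintype.card (LinearMap.range L) := by
    have : Finset.image (fun x => e (L x)) Finset.univ
        = Finset.image e (Finset.image (⇑L) Finset.univ) := by
      rw [Finset.image_image]; rfl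
    rw [this, Finset.card_image_of_injective _ he]
    have himg : Finset.image (⇑L) Finset.univ = (LinearMap.range L : Set N).toFinset := by
      ext y
      simp [LinearMap.mem_range, eq_comm]
    rw [himg, Set.toFinset_card]
    exact Fintype.card_congr (Equiv.refl _)
  have h3 : Fintype.card (LinearMap.range L)
      = Fintype.card F ^ Module.finrank F (LinearMap.range L) := Module.card_eq_pow_finrank
  rw [h1, h2, h3]
  push_cast
  rw [Real.log_pow]

/-- Rank formula for mutual information leaked to an eavesdropper under coset coding:
    for X uniform on GF(q)^B, S = HX, E = GX, and any Γ' with |Γ'| ≤ B - μ,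
    I(S_{Γ'}; E) = (rank H_{Γ'} + rank G - rank [H_{Γ'}; G]) · log q. -/
theorem mutualInfo_rank_formula (F : Type*) [Field F] [Fintype F] [DecidableEq F]
    (Bs B μ : ℕ) (H : Matrix (Fin Bs) (Fin B) F) (G : Matrix (Fin μ) (Fin B) F)
    (Γ' : Finset (Fin Bs)) (hΓ : Γ'.card ≤ B - μ) :
    mutualInfo (fun _ : Fin B → F => (1 : ℝ) / (Fintype.card F) ^ B)
        (fun x => (H.submatrix (fun i : ↥Γ' => (i : Fin Bs)) id).mulVec x)
        (fun x => G.mulVec x)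
      = (((H.submatrix (fun i : ↥Γ' => (i : Fin Bs)) id).rank : ℝ) + (G.rank : ℝ)
          - ((Matrix.fromRows (H.submatrix (fun i : ↥Γ' => (i : Fin Bs)) id) G).rank : ℝ))
        * Real.log (Fintype.card F) := by
  classical
  haveI : Nonempty (Fin B → F) := ⟨fun _ => 0⟩
  set A := H.submatrix (fun i : ↥Γ' => (i : Fin Bs)) id with hA
  have hw : (fun _ : Fin B → F => (1 : ℝ) / (Fintype.card F) ^ B)
      = (fun _ : Fin B → F => 1 / (Fintype.card (Fin B → F) : ℝ)) := by
    funext x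
    rw [Fintype.card_fun, Fintype.card_fin]
    push_cast
    ring
  rw [mutualInfo, hw]
  have e1 : (fun x : Fin B → F => A.mulVec x) = (fun x => id (A.mulVecLin x)) := by
    funext x; rfl
  have e2 : (fun x : Fin B → F => G.mulVec x) = (fun x => id (G.mulVecLin x)) := by
    funext x; rfl
  have e3 : (fun x : Fin B → F => (A.mulVec x, G.mulVec x))
      = (fun x => (Equiv.sumArrowEquivProdArrow _ _ F)
          ((Matrix.fromRows A G).mulVecLin x)) := by
    funext x
    simp only [Matrix.mulVecLin_apply, Matrix.fromRows_mulVec]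
    rfl
  rw [e1, e2, e3,
    entropy_inj_linear A.mulVecLin id Function.injective_id,
    entropy_inj_linear G.mulVecLin id Function.injective_id,
    entropy_inj_linear (Matrix.fromRows A G).mulVecLin _
      (Equiv.sumArrowEquivProdArrow _ _ F).injective]
  have rA : Module.finrank F (LinearMap.range A.mulVecLin) = A.rank := rfl
  have rG : Module.finrank F (LinearMap.range G.mulVecLin) = G.rank := rfl
  have rF : Module.finrank F (LinearMap.range (Matrix.fromRows A G).mulVecLin)
      = (Matrix.fromRows A G).rank := rfl
  rw [rA, rG, rF]
  ring
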